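/- arXiv:2206.12855 — 2 statements merged into one kernel-verified Lean document; each statement's English description precedes it below -/
import Mathlib

section
/- In a strongly unital category satisfying the condition that every morphism with zero kernel is a monomorphism, if k : X → A and l : Y → A are Bourn-normal monomorphisms whose pullback is a zero object, then k and l Huq-commute and their cooperator φ : X × Y → A is a monomorphism which is the join of k and l in the poset of subobjects of A. -/
open CategoryTheory CategoryTheory.Limits

universe v u

noncomputable section

variable {C : Type u} [Category.{v} C]

/-- A pair of morphisms with common codomain is jointly strongly epimorphic:
it has the lifting property against all monomorphisms. -/
def JointlyStrongEpi {X Y Z : C} (f : X ⟶ Z) (g : Y ⟶ Z) : Prop :=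
  ∀ {U V : C} (m : U ⟶ V) (_ : Mono m) (h : Z ⟶ V) (u : X ⟶ U) (v : Y ⟶ U),
    u ≫ m = f ≫ h → v ≫ m = g ≫ h → ∃ t : Z ⟶ U, t ≫ m = h

variable (C) in
/-- A unital category: pointed, finitely complete, and the product inclusions
`⟨1,0⟩ : X → X × Y` and `⟨0,1⟩ : Y → X × Y` are jointly strongly epimorphic. -/
class Unital [HasZeroObject C] [HasZeroMorphisms C] [HasFiniteLimits C] : Prop where
  jse : ∀ X Y : C, JointlyStrongEpi (prod.lift (𝟙 X) (0 : X ⟶ Y)) (prod.lift (0 : Y ⟶ X) (𝟙 Y))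

/-- `f : X ⟶ A` and `g : Y ⟶ A` Huq-commute: there is a cooperator
`φ : X × Y ⟶ A` with `φ∘⟨1,0⟩ = f` and `φ∘⟨0,1⟩ = g`. -/
def HuqCommute [HasZeroMorphisms C] [HasFiniteLimits C] {X Y A : C} (f : X ⟶ A) (g : Y ⟶ A) : Prop :=
  ∃ φ : X ⨯ Y ⟶ A, prod.lift (𝟙 X) 0 ≫ φ = f ∧ prod.lift 0 (𝟙 Y) ≫ φ = g

variable [HasZeroMorphisms C] [HasFiniteLimits C]

/-- `(r₁, r₂) : R ⇉ A` is an internal equivalence relation. -/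
structure IsEquivRelation {R A : C} (r₁ r₂ : R ⟶ A) : Prop where
  mono : Mono (prod.lift r₁ r₂)
  refl : ∃ e : A ⟶ R, e ≫ r₁ = 𝟙 A ∧ e ≫ r₂ = 𝟙 A
  symm : ∃ σ : R ⟶ R, σ ≫ r₁ = r₂ ∧ σ ≫ r₂ = r₁
  trans : ∃ τ : pullback r₂ r₁ ⟶ R,
    τ ≫ r₁ = pullback.fst r₂ r₁ ≫ r₁ ∧ τ ≫ r₂ = pullback.snd r₂ r₁ ≫ r₂

/-- A monomorphism `k : X ⟶ A` is Bourn-normal if it is the zero class of some internal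
equivalence relation on `A`, i.e. `k` is the pullback of the relation's pairing
`⟨r₁,r₂⟩ : R → A × A` along `⟨1,0⟩ : A → A × A`. -/
def BournNormal {X A : C} (k : X ⟶ A) : Prop :=
  Mono k ∧ ∃ (R : C) (r₁ r₂ : R ⟶ A) (_ : IsEquivRelation r₁ r₂) (κ : X ⟶ R),
    IsPullback κ k (prod.lift r₁ r₂) (prod.lift (𝟙 A) 0)

variable (C) in
/-- A strongly unital category: pointed, finitely complete, and for every object `X` the
morphisms `⟨1,0⟩ : X → X × X` and the diagonal `⟨1,1⟩ : X → X × X` are jointly strongly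
epimorphic (this entails unitality). -/
class StronglyUnital [HasZeroObject C] : Prop where
  jse : ∀ X Y : C, JointlyStrongEpi (prod.lift (𝟙 X) (0 : X ⟶ Y)) (prod.lift (0 : Y ⟶ X) (𝟙 Y))
  jse' : ∀ X : C, JointlyStrongEpi (prod.lift (𝟙 X) (0 : X ⟶ X)) (prod.lift (𝟙 X) (𝟙 X))

attribute [local simp] prod.lift_fst prod.lift_snd prod.lift_fst_assoc prod.lift_snd_assoc pullback.lift_fst pullback.lift_snd pullback.lift_fst_assoc pullback.lift_snd_assoc

/-- In a strongly unital category in which every morphism with zero kernel is a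
monomorphism, Bourn-normal monomorphisms `k, l` with the same codomain and zero pullback
Huq-commute, and their cooperator is a monomorphism which is the join of `k` and `l`
in the subobjects of `A`. -/
theorem stmt14 [HasZeroObject C] [StronglyUnital C]
    (hcond : ∀ {A B : C} (f : A ⟶ B), IsZero (kernel f) → Mono f)
    {X Y A : C} (k : X ⟶ A) (l : Y ⟶ A)
    (hk : BournNormal k) (hl : BournNormal l)
    (hmeet : IsZero (pullback k l)) :
    ∃ φ : X ⨯ Y ⟶ A,
      prod.lift (𝟙 X) 0 ≫ φ = k ∧ prod.lift 0 (𝟙 Y) ≫ φ = l ∧ Mono φ ∧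
      (∀ {M : C} (m : M ⟶ A), Mono m → (∃ x : X ⟶ M, x ≫ m = k) →
        (∃ y : Y ⟶ M, y ≫ m = l) → ∃ t : X ⨯ Y ⟶ M, t ≫ m = φ) := by
  
  obtain ⟨hkm, R, r₁, r₂, hR, κ, hκ⟩ := hk
  obtain ⟨hlmono, S, s₁, s₂, hS, lam, hlam⟩ := hl
  have hκ1 : κ ≫ r₁ = k := by simpa using congrArg (· ≫ prod.fst) hκ.w
  have hκ2 : κ ≫ r₂ = 0 := by simpa using congrArg (· ≫ prod.snd) hκ.w
  have hlam1 : lam ≫ s₁ = l := by simpa using congrArg (· ≫ prod.fst) hlam.w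
  have hlam2 : lam ≫ s₂ = 0 := by simpa using congrArg (· ≫ prod.snd) hlam.w
  haveI hRm : Mono (prod.lift r₁ r₂) := hR.mono
  haveI hSm : Mono (prod.lift s₁ s₂) := hS.mono
  obtain ⟨eR, heR1, heR2⟩ := hR.refl
  obtain ⟨eS, heS1, heS2⟩ := hS.refl
  -- symmetry helper
  have symmOf : ∀ {R' : C} {a b : R' ⟶ A}, IsEquivRelation a b → ∀ {W : C} (ρ : W ⟶ R'),
      ∃ ρ' : W ⟶ R', ρ' ≫ a = ρ ≫ b ∧ ρ' ≫ b = ρ ≫ a := by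
    intro R' a b h W ρ
    obtain ⟨σ, hσ1, hσ2⟩ := h.symm
    exact ⟨ρ ≫ σ, by rw [Category.assoc, hσ1], by rw [Category.assoc, hσ2]⟩
  -- "connecting" helper : if ρ₁ : (d₁, c) and ρ₂ : (d₂, c), there is ρ : (d₁, d₂)
  have connOf : ∀ {R' : C} {a b : R' ⟶ A}, IsEquivRelation a b → ∀ {W : C} (ρ₁ ρ₂ : W ⟶ R'),
      ρ₁ ≫ b = ρ₂ ≫ b → ∃ ρ : W ⟶ R', ρ ≫ a = ρ₁ ≫ a ∧ ρ ≫ b = ρ₂ ≫ a := by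
    intro R' a b h W ρ₁ ρ₂ hw
    obtain ⟨ρ₂', h1, h2⟩ := symmOf h ρ₂
    obtain ⟨τ, hτ1, hτ2⟩ := h.trans
    refine ⟨pullback.lift ρ₁ ρ₂' (by rw [h1, hw]) ≫ τ, ?_, ?_⟩
    · rw [Category.assoc, hτ1, ← Category.assoc, pullback.lift_fst]
    · rw [Category.assoc, hτ2, ← Category.assoc, pullback.lift_snd, h2]
  
  -- The intersection relation E = R ∩ S, as a pullback over A ⨯ A.
  set pE₁ : pullback (prod.lift r₁ r₂) (prod.lift s₁ s₂) ⟶ R :=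
    pullback.fst (prod.lift r₁ r₂) (prod.lift s₁ s₂) with hpE₁
  set pE₂ : pullback (prod.lift r₁ r₂) (prod.lift s₁ s₂) ⟶ S :=
    pullback.snd (prod.lift r₁ r₂) (prod.lift s₁ s₂) with hpE₂
  have hEc : pE₁ ≫ prod.lift r₁ r₂ = pE₂ ≫ prod.lift s₁ s₂ := pullback.condition
  have hEc1 : pE₁ ≫ r₁ = pE₂ ≫ s₁ := by simpa using congrArg (· ≫ prod.fst) hEc
  have hEc2 : pE₁ ≫ r₂ = pE₂ ≫ s₂ := by simpa using congrArg (· ≫ prod.snd) hEc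
  -- the second projection of E has zero kernel, hence is mono
  have hKzero : IsZero (kernel (pE₁ ≫ r₂)) := by
    have hι : kernel.ι (pE₁ ≫ r₂) ≫ pE₁ ≫ r₂ = 0 := by
      exact kernel.condition (pE₁ ≫ r₂)
    -- lift the first-leg endpoint through k
    have wx : (kernel.ι (pE₁ ≫ r₂) ≫ pE₁) ≫ prod.lift r₁ r₂ =
        (kernel.ι (pE₁ ≫ r₂) ≫ pE₁ ≫ r₁) ≫ prod.lift (𝟙 A) 0 := by
      apply Limits.prod.hom_ext
      · simp
      · simp [hι]
    have wy : (kernel.ι (pE₁ ≫ r₂) ≫ pE₂) ≫ prod.lift s₁ s₂ =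
        (kernel.ι (pE₁ ≫ r₂) ≫ pE₁ ≫ r₁) ≫ prod.lift (𝟙 A) 0 := by
      apply Limits.prod.hom_ext
      · simp [← hEc1]
      · simp [← hEc2, hι]
    set x : kernel (pE₁ ≫ r₂) ⟶ X := hκ.lift _ _ wx with hx
    set y : kernel (pE₁ ≫ r₂) ⟶ Y := hlam.lift _ _ wy with hy
    have hxk : x ≫ k = kernel.ι (pE₁ ≫ r₂) ≫ pE₁ ≫ r₁ := hκ.lift_snd _ _ wx
    have hyl : y ≫ l = kernel.ι (pE₁ ≫ r₂) ≫ pE₁ ≫ r₁ := hlam.lift_snd _ _ wy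
    have hz : pullback.lift x y (hxk.trans hyl.symm) = 0 := hmeet.eq_of_tgt _ _
    have hx0 : x = 0 := by
      have := congrArg (· ≫ pullback.fst k l) hz
      simpa using this
    have hι1 : kernel.ι (pE₁ ≫ r₂) ≫ pE₁ ≫ r₁ = 0 := by rw [← hxk, hx0, zero_comp]
    have hιE1 : kernel.ι (pE₁ ≫ r₂) ≫ pE₁ = 0 := by
      rw [← cancel_mono (prod.lift r₁ r₂)]
      apply Limits.prod.hom_ext
      · simp [hι1]
      · simp [hι]
    have hιE2 : kernel.ι (pE₁ ≫ r₂) ≫ pE₂ = 0 := by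
      rw [← cancel_mono (prod.lift s₁ s₂)]
      apply Limits.prod.hom_ext
      · simp [← hEc1, hι1]
      · simp [← hEc2, hι]
    have : kernel.ι (pE₁ ≫ r₂) = 0 := by
      apply pullback.hom_ext
      · simpa using hιE1
      · simpa using hιE2
    exact IsZero.of_mono_eq_zero _ this
  have hE2mono : Mono (pE₁ ≫ r₂) := hcond _ hKzero
  -- reflexivity of E
  have hEw : eR ≫ prod.lift r₁ r₂ = eS ≫ prod.lift s₁ s₂ := by
    apply Limits.prod.hom_ext <;> simp [heR1, heR2, heS1, heS2]
  have heE2 : pullback.lift eR eS hEw ≫ pE₁ ≫ r₂ = 𝟙 A := by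
    rw [← Category.assoc, hpE₁, pullback.lift_fst, heR2]
  have heE2' : (pE₁ ≫ r₂) ≫ pullback.lift eR eS hEw = 𝟙 _ := by
    rw [← cancel_mono (pE₁ ≫ r₂)]
    rw [Category.assoc, heE2, Category.comp_id, Category.id_comp]
  have hE12 : pE₁ ≫ r₁ = pE₁ ≫ r₂ := by
    calc pE₁ ≫ r₁ = ((pE₁ ≫ r₂) ≫ pullback.lift eR eS hEw) ≫ pE₁ ≫ r₁ := by
          rw [heE2', Category.id_comp]
    _ = (pE₁ ≫ r₂) ≫ (pullback.lift eR eS hEw ≫ pE₁) ≫ r₁ := by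
          simp only [Category.assoc]
    _ = (pE₁ ≫ r₂) ≫ eR ≫ r₁ := by rw [hpE₁, pullback.lift_fst]
    _ = pE₁ ≫ r₂ := by rw [heR1, Category.comp_id]
  -- Key discreteness lemma: anything related by both R and S is equal.
  have L : ∀ {W : C} {d₁ d₂ : W ⟶ A} (ρ : W ⟶ R) (σ : W ⟶ S),
      ρ ≫ r₁ = d₁ → ρ ≫ r₂ = d₂ → σ ≫ s₁ = d₁ → σ ≫ s₂ = d₂ → d₁ = d₂ := by
    intro W d₁ d₂ ρ σ h1 h2 h3 h4
    have hzw : ρ ≫ prod.lift r₁ r₂ = σ ≫ prod.lift s₁ s₂ := by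
      apply Limits.prod.hom_ext
      · simp [h1, h3]
      · simp [h2, h4]
    calc d₁ = pullback.lift ρ σ hzw ≫ pE₁ ≫ r₁ := by
          rw [← Category.assoc, hpE₁, pullback.lift_fst, h1]
    _ = pullback.lift ρ σ hzw ≫ pE₁ ≫ r₂ := by rw [hE12]
    _ = d₂ := by rw [← Category.assoc, hpE₁, pullback.lift_fst, h2]
  
  -- The object T = R ×_A S (pairs of R- and S-arrows with common source)
  set cT₁ : pullback r₁ s₁ ⟶ R := pullback.fst r₁ s₁ with hcT₁
  set cT₂ : pullback r₁ s₁ ⟶ S := pullback.snd r₁ s₁ with hcT₂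
  have hT : cT₁ ≫ r₁ = cT₂ ≫ s₁ := pullback.condition
  set cc : pullback r₁ s₁ ⟶ A ⨯ A := prod.lift (cT₁ ≫ r₂) (cT₂ ≫ s₂) with hcc
  set dd : Y ⨯ X ⟶ A ⨯ A := prod.map l k with hdd
  -- The graph object G
  set πT : pullback cc dd ⟶ pullback r₁ s₁ := pullback.fst cc dd with hπT
  set πYX : pullback cc dd ⟶ Y ⨯ X := pullback.snd cc dd with hπYX
  set q : pullback cc dd ⟶ A := πT ≫ cT₁ ≫ r₁ with hqdef
  set p : pullback cc dd ⟶ X ⨯ Y := πYX ≫ prod.lift prod.snd prod.fst with hpdef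
  have hGc1 : πT ≫ cT₁ ≫ r₂ = πYX ≫ prod.fst ≫ l := by
    have h := congrArg (· ≫ prod.fst) (pullback.condition (f := cc) (g := dd))
    simpa [hcc, hdd, hπT, hπYX, hcT₁, hcT₂] using h
  have hGc2 : πT ≫ cT₂ ≫ s₂ = πYX ≫ prod.snd ≫ k := by
    have h := congrArg (· ≫ prod.snd) (pullback.condition (f := cc) (g := dd))
    simpa [hcc, hdd, hπT, hπYX, hcT₁, hcT₂] using h
  have hText : ∀ {W : C} {t₁ t₂ : W ⟶ pullback r₁ s₁}, t₁ ≫ cT₁ = t₂ ≫ cT₁ →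
      t₁ ≫ cT₂ = t₂ ≫ cT₂ → t₁ = t₂ := by
    intro W t₁ t₂ h1 h2
    apply pullback.hom_ext
    · simpa [hcT₁] using h1
    · simpa [hcT₂] using h2
  have hGext : ∀ {W : C} {g₁ g₂ : W ⟶ pullback cc dd}, g₁ ≫ πT = g₂ ≫ πT →
      g₁ ≫ πYX = g₂ ≫ πYX → g₁ = g₂ := by
    intro W g₁ g₂ h1 h2
    apply pullback.hom_ext
    · simpa [hπT] using h1
    · simpa [hπYX] using h2
  -- generic component computations
  have hgR1 : ∀ {W : C} (g : W ⟶ pullback cc dd), g ≫ πT ≫ cT₁ ≫ r₁ = g ≫ q := by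
    intro W g; rw [hqdef]
  have hgS1 : ∀ {W : C} (g : W ⟶ pullback cc dd), g ≫ πT ≫ cT₂ ≫ s₁ = g ≫ q := by
    intro W g; rw [hqdef, ← hT]
  have hgR2 : ∀ {W : C} (g : W ⟶ pullback cc dd),
      g ≫ πT ≫ cT₁ ≫ r₂ = g ≫ πYX ≫ prod.fst ≫ l := by
    intro W g; rw [hGc1]
  have hgS2 : ∀ {W : C} (g : W ⟶ pullback cc dd),
      g ≫ πT ≫ cT₂ ≫ s₂ = g ≫ πYX ≫ prod.snd ≫ k := by
    intro W g; rw [hGc2]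
  -- the canonical points u : X ⟶ G and v : Y ⟶ G
  have huT : κ ≫ r₁ = (k ≫ eS) ≫ s₁ := by
    rw [hκ1, Category.assoc, heS1, Category.comp_id]
  have huG : pullback.lift κ (k ≫ eS) huT ≫ cc = prod.lift (0 : X ⟶ Y) (𝟙 X) ≫ dd := by
    apply Limits.prod.hom_ext
    · simp [hcc, hdd, hcT₁, hκ2]
    · simp [hcc, hdd, hcT₂, heS2]
  set u : X ⟶ pullback cc dd := pullback.lift _ _ huG with hudef
  have huπT : u ≫ πT = pullback.lift κ (k ≫ eS) huT := by simp [hudef, hπT]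
  have huπYX : u ≫ πYX = prod.lift 0 (𝟙 X) := by simp [hudef, hπYX]
  have hup : u ≫ p = prod.lift (𝟙 X) 0 := by
    rw [hpdef, ← Category.assoc, huπYX]
    apply Limits.prod.hom_ext <;> simp
  have huq : u ≫ q = k := by
    rw [hqdef, ← Category.assoc, huπT, hcT₁, ← Category.assoc, pullback.lift_fst, hκ1]
  have hvT : (l ≫ eR) ≫ r₁ = lam ≫ s₁ := by
    rw [Category.assoc, heR1, Category.comp_id, hlam1]
  have hvG : pullback.lift (l ≫ eR) lam hvT ≫ cc = prod.lift (𝟙 Y) (0 : Y ⟶ X) ≫ dd := by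
    apply Limits.prod.hom_ext
    · simp [hcc, hdd, hcT₁, heR2]
    · simp [hcc, hdd, hcT₂, hlam2]
  set v : Y ⟶ pullback cc dd := pullback.lift _ _ hvG with hvdef
  have hvπT : v ≫ πT = pullback.lift (l ≫ eR) lam hvT := by simp [hvdef, hπT]
  have hvπYX : v ≫ πYX = prod.lift (𝟙 Y) 0 := by simp [hvdef, hπYX]
  have hvp : v ≫ p = prod.lift 0 (𝟙 Y) := by
    rw [hpdef, ← Category.assoc, hvπYX]
    apply Limits.prod.hom_ext <;> simp
  have hvq : v ≫ q = l := by
    rw [hqdef, ← Category.assoc, hvπT, hcT₁, ← Category.assoc, pullback.lift_fst,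
      Category.assoc, heR1, Category.comp_id]
  -- equality of the T-components follows from equality of the other data
  have hπTeq : ∀ {W : C} (g₁ g₂ : W ⟶ pullback cc dd), g₁ ≫ q = g₂ ≫ q →
      g₁ ≫ πYX = g₂ ≫ πYX → g₁ ≫ πT = g₂ ≫ πT := by
    intro W g₁ g₂ hqe hyx
    have hyx3 : ∀ {Z : C} (w : Y ⨯ X ⟶ Z), g₁ ≫ πYX ≫ w = g₂ ≫ πYX ≫ w := by
      intro Z w; simp only [← Category.assoc]; rw [hyx]
    have h1 : (g₁ ≫ πT) ≫ cT₁ = (g₂ ≫ πT) ≫ cT₁ := by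
      rw [← cancel_mono (prod.lift r₁ r₂)]
      apply Limits.prod.hom_ext
      · simp only [Category.assoc, prod.lift_fst]
        rw [hgR1 g₁, hgR1 g₂, hqe]
      · simp only [Category.assoc, prod.lift_snd]
        rw [hgR2 g₁, hgR2 g₂]
        exact hyx3 _
    have h2 : (g₁ ≫ πT) ≫ cT₂ = (g₂ ≫ πT) ≫ cT₂ := by
      rw [← cancel_mono (prod.lift s₁ s₂)]
      apply Limits.prod.hom_ext
      · simp only [Category.assoc, prod.lift_fst]
        rw [hgS1 g₁, hgS1 g₂, hqe]
      · simp only [Category.assoc, prod.lift_snd]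
        rw [hgS2 g₁, hgS2 g₂]
        exact hyx3 _
    exact hText h1 h2
  -- p is a monomorphism
  have monop : Mono p := by
    constructor
    intro W g₁ g₂ hpe
    have key : ∀ g : W ⟶ pullback cc dd,
        (g ≫ p) ≫ prod.lift prod.snd prod.fst = g ≫ πYX := by
      intro g
      rw [hpdef]
      apply Limits.prod.hom_ext <;> simp
    have hyx : g₁ ≫ πYX = g₂ ≫ πYX := by rw [← key g₁, ← key g₂, hpe]
    have hyx3 : ∀ {Z : C} (w : Y ⨯ X ⟶ Z), g₁ ≫ πYX ≫ w = g₂ ≫ πYX ≫ w := by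
      intro Z w; simp only [← Category.assoc]; rw [hyx]
    obtain ⟨ρ, hρ1, hρ2⟩ := connOf hR (g₁ ≫ πT ≫ cT₁) (g₂ ≫ πT ≫ cT₁) (by
      simp only [Category.assoc]
      rw [hgR2 g₁, hgR2 g₂]
      exact hyx3 _)
    obtain ⟨σ, hσ1, hσ2⟩ := connOf hS (g₁ ≫ πT ≫ cT₂) (g₂ ≫ πT ≫ cT₂) (by
      simp only [Category.assoc]
      rw [hgS2 g₁, hgS2 g₂]
      exact hyx3 _)
    have hqe : g₁ ≫ q = g₂ ≫ q :=
      L ρ σ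
        (by rw [hρ1]; simp only [Category.assoc]; try rw [hgR1 g₁])
        (by rw [hρ2]; simp only [Category.assoc]; try rw [hgR1 g₂])
        (by rw [hσ1]; simp only [Category.assoc]; try rw [hgS1 g₁])
        (by rw [hσ2]; simp only [Category.assoc]; try rw [hgS1 g₂])
    exact hGext (hπTeq g₁ g₂ hqe hyx) hyx
  -- q is a monomorphism
  have monoq : Mono q := by
    constructor
    intro W g₁ g₂ hqe
    -- the Y-components agree
    obtain ⟨ρ₁', hρ₁'1, hρ₁'2⟩ := symmOf hR (g₁ ≫ πT ≫ cT₁)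
    obtain ⟨ρ₂', hρ₂'1, hρ₂'2⟩ := symmOf hR (g₂ ≫ πT ≫ cT₁)
    obtain ⟨ρY, hρY1, hρY2⟩ := connOf hR ρ₁' ρ₂' (by
      rw [hρ₁'2, hρ₂'2]
      simp only [Category.assoc]
      rw [hgR1 g₁, hgR1 g₂, hqe])
    obtain ⟨σY, hσY1, hσY2⟩ := connOf hS (g₁ ≫ πYX ≫ prod.fst ≫ lam)
      (g₂ ≫ πYX ≫ prod.fst ≫ lam) (by
        simp only [Category.assoc]
        rw [hlam2]
        simp)
    have hy : g₁ ≫ πYX ≫ prod.fst ≫ l = g₂ ≫ πYX ≫ prod.fst ≫ l :=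
      L ρY σY
        (by rw [hρY1, hρ₁'1]; simp only [Category.assoc]; rw [hgR2 g₁])
        (by rw [hρY2, hρ₂'1]; simp only [Category.assoc]; rw [hgR2 g₂])
        (by rw [hσY1]; simp only [Category.assoc]; rw [hlam1])
        (by rw [hσY2]; simp only [Category.assoc]; rw [hlam1])
    -- the X-components agree
    obtain ⟨σ₁', hσ₁'1, hσ₁'2⟩ := symmOf hS (g₁ ≫ πT ≫ cT₂)
    obtain ⟨σ₂', hσ₂'1, hσ₂'2⟩ := symmOf hS (g₂ ≫ πT ≫ cT₂)
    obtain ⟨σx, hσx1, hσx2⟩ := connOf hS σ₁' σ₂' (by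
      rw [hσ₁'2, hσ₂'2]
      simp only [Category.assoc]
      rw [hgS1 g₁, hgS1 g₂, hqe])
    obtain ⟨ρx, hρx1, hρx2⟩ := connOf hR (g₁ ≫ πYX ≫ prod.snd ≫ κ)
      (g₂ ≫ πYX ≫ prod.snd ≫ κ) (by
        simp only [Category.assoc]
        rw [hκ2]
        simp)
    have hx : g₁ ≫ πYX ≫ prod.snd ≫ k = g₂ ≫ πYX ≫ prod.snd ≫ k :=
      L ρx σx
        (by rw [hρx1]; simp only [Category.assoc]; rw [hκ1])
        (by rw [hρx2]; simp only [Category.assoc]; rw [hκ1])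
        (by rw [hσx1, hσ₁'1]; simp only [Category.assoc]; rw [hgS2 g₁])
        (by rw [hσx2, hσ₂'1]; simp only [Category.assoc]; rw [hgS2 g₂])
    haveI := hlmono
    haveI := hkm
    have hyY : g₁ ≫ πYX ≫ prod.fst = g₂ ≫ πYX ≫ prod.fst := by
      rw [← cancel_mono l]
      simp only [Category.assoc]
      exact hy
    have hxX : g₁ ≫ πYX ≫ prod.snd = g₂ ≫ πYX ≫ prod.snd := by
      rw [← cancel_mono k]
      simp only [Category.assoc]
      exact hx
    have hyx : g₁ ≫ πYX = g₂ ≫ πYX := by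
      apply Limits.prod.hom_ext
      · simpa only [Category.assoc] using hyY
      · simpa only [Category.assoc] using hxX
    exact hGext (hπTeq g₁ g₂ hqe hyx) hyx
  -- the section of p, via strong unitality
  obtain ⟨t, htp⟩ := StronglyUnital.jse (C := C) X Y p monop (𝟙 (X ⨯ Y)) u v
    (by rw [Category.comp_id]; exact hup) (by rw [Category.comp_id]; exact hvp)
  haveI := monop
  have h1 : prod.lift (𝟙 X) 0 ≫ t = u := by
    rw [← cancel_mono p, Category.assoc, htp, Category.comp_id, hup]
  have h2 : prod.lift 0 (𝟙 Y) ≫ t = v := by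
    rw [← cancel_mono p, Category.assoc, htp, Category.comp_id, hvp]
  have hφ1 : prod.lift (𝟙 X) 0 ≫ t ≫ q = k := by rw [← Category.assoc, h1, huq]
  have hφ2 : prod.lift 0 (𝟙 Y) ≫ t ≫ q = l := by rw [← Category.assoc, h2, hvq]
  refine ⟨t ≫ q, hφ1, hφ2, ?_, ?_⟩
  · haveI : IsSplitMono t := IsSplitMono.mk' ⟨p, htp⟩
    haveI := monoq
    exact mono_comp _ _
  · intro M m hm hx' hy'
    obtain ⟨x, hx⟩ := hx'
    obtain ⟨y, hy⟩ := hy'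
    exact StronglyUnital.jse (C := C) X Y m hm (t ≫ q) x y
      (by rw [hx, hφ1]) (by rw [hy, hφ2])
end
end

section
/- In a strongly unital category satisfying the condition that every morphism with zero kernel is a monomorphism, an object X is abelian if and only if the diagonal ⟨1,1⟩ : X → X × X is a Bourn-normal monomorphism. -/
open CategoryTheory CategoryTheory.Limits

universe v u

noncomputable section

attribute [local simp] prod.lift_fst prod.lift_snd prod.lift_fst_assoc prod.lift_snd_assoc
attribute [local simp] pullback.lift_fst pullback.lift_snd pullback.lift_fst_assoc pullback.lift_snd_assoc

variable {C : Type u} [Category.{v} C]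

variable [HasZeroMorphisms C] [HasFiniteLimits C]

/-- Auxiliary: a mono which is zero has zero source. -/
lemma aux_isZero_of_mono_eq_zero [HasZeroObject C] {K W : C} (ι : K ⟶ W) [Mono ι]
    (h : ι = 0) : IsZero K := by
  rw [IsZero.iff_id_eq_zero, ← cancel_mono ι, h]
  simp

/-- Auxiliary lemma: the backward direction. -/
lemma backward_aux [HasZeroObject C] [StronglyUnital C]
    (hcond : ∀ {A B : C} (f : A ⟶ B), IsZero (kernel f) → Mono f) {X R : C}
    (r₁ r₂ : R ⟶ X ⨯ X) (κ : X ⟶ R) (e : X ⨯ X ⟶ R)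
    (hmono : Mono (prod.lift r₁ r₂))
    (he1 : e ≫ r₁ = 𝟙 _) (he2 : e ≫ r₂ = 𝟙 _)
    (hκ1 : κ ≫ r₁ = prod.lift (𝟙 X) (𝟙 X)) (hκ2 : κ ≫ r₂ = 0)
    (hpb : IsPullback κ (prod.lift (𝟙 X) (𝟙 X)) (prod.lift r₁ r₂) (prod.lift (𝟙 (X ⨯ X)) 0)) :
    HuqCommute (𝟙 X) (𝟙 X) := by
  haveI := hmono
  have hwcond : pullback.fst r₂ (prod.lift 0 (𝟙 X)) ≫ r₂
      = pullback.snd r₂ (prod.lift 0 (𝟙 X)) ≫ prod.lift 0 (𝟙 X) := pullback.condition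
  -- the comparison morphism w
  set w : pullback r₂ (prod.lift 0 (𝟙 X)) ⟶ X ⨯ X :=
    prod.lift (pullback.fst r₂ (prod.lift 0 (𝟙 X)) ≫ r₁ ≫ prod.fst)
      (pullback.snd r₂ (prod.lift 0 (𝟙 X))) with hw
  -- w has zero kernel, hence is a mono
  have hwfst : w ≫ prod.fst = pullback.fst r₂ (prod.lift 0 (𝟙 X)) ≫ r₁ ≫ prod.fst := by
    rw [hw, prod.lift_fst]
  have hwsnd : w ≫ prod.snd = pullback.snd r₂ (prod.lift 0 (𝟙 X)) := by
    rw [hw, prod.lift_snd]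
  have hker : IsZero (kernel w) := by
    set k := kernel.ι w with hk
    haveI : Mono k := by rw [hk]; infer_instance
    have h0 : k ≫ w = 0 := kernel.condition w
    have h1 : k ≫ pullback.fst r₂ (prod.lift 0 (𝟙 X)) ≫ r₁ ≫ prod.fst = 0 := by
      have h := h0 =≫ prod.fst
      rw [Category.assoc, hwfst] at h
      simpa using h
    have h2 : k ≫ pullback.snd r₂ (prod.lift 0 (𝟙 X)) = 0 := by
      have h := h0 =≫ prod.snd
      rw [Category.assoc, hwsnd] at h
      simpa using h
    have h3 : (k ≫ pullback.fst r₂ (prod.lift 0 (𝟙 X))) ≫ r₂ = 0 := by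
      rw [Category.assoc, hwcond, ← Category.assoc, h2, zero_comp]
    have hsq : (k ≫ pullback.fst r₂ (prod.lift 0 (𝟙 X))) ≫ prod.lift r₁ r₂
        = ((k ≫ pullback.fst r₂ (prod.lift 0 (𝟙 X))) ≫ r₁) ≫ prod.lift (𝟙 (X ⨯ X)) 0 := by
      apply Limits.prod.hom_ext <;> simp [h3]
    have hl2 : hpb.lift _ _ hsq ≫ prod.lift (𝟙 X) (𝟙 X)
        = (k ≫ pullback.fst r₂ (prod.lift 0 (𝟙 X))) ≫ r₁ := hpb.lift_snd _ _ hsq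
    have hr1 : (k ≫ pullback.fst r₂ (prod.lift 0 (𝟙 X))) ≫ r₁ = 0 := by
      have h := hl2 =≫ prod.fst
      rw [Category.assoc, prod.lift_fst, Category.comp_id] at h
      have h1' : ((k ≫ pullback.fst r₂ (prod.lift 0 (𝟙 X))) ≫ r₁) ≫ prod.fst = 0 := by
        rw [Category.assoc, Category.assoc]; exact h1
      rw [h.trans h1', zero_comp] at hl2
      exact hl2.symm
    have hkw : k ≫ pullback.fst r₂ (prod.lift 0 (𝟙 X)) = 0 := by
      rw [← cancel_mono (prod.lift r₁ r₂)]
      apply Limits.prod.hom_ext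
      · simpa using hr1
      · simpa using h3
    have hk0 : k = 0 := by
      apply pullback.hom_ext
      · rw [hkw, zero_comp]
      · rw [h2, zero_comp]
    exact aux_isZero_of_mono_eq_zero k hk0
  have hwmono : Mono w := hcond w hker
  have hκ1f : κ ≫ r₁ ≫ prod.fst = 𝟙 X := by rw [← Category.assoc, hκ1, prod.lift_fst]
  have hκ1s : κ ≫ r₁ ≫ prod.snd = 𝟙 X := by rw [← Category.assoc, hκ1, prod.lift_snd]
  have he1f : e ≫ r₁ ≫ prod.fst = prod.fst := by
    rw [← Category.assoc, he1, Category.id_comp]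
  have he1s : e ≫ r₁ ≫ prod.snd = prod.snd := by
    rw [← Category.assoc, he1, Category.id_comp]
  -- the two sections of w
  have huw : pullback.lift κ 0 (by rw [hκ2, zero_comp]) ≫ w = prod.lift (𝟙 X) 0 := by
    apply Limits.prod.hom_ext
    · rw [Category.assoc, hwfst, ← Category.assoc, pullback.lift_fst, hκ1f, prod.lift_fst]
    · rw [Category.assoc, hwsnd, pullback.lift_snd, prod.lift_snd]
  have hvw : pullback.lift (prod.lift 0 (𝟙 X) ≫ e) (𝟙 X)
        (by rw [Category.assoc, he2, Category.comp_id, Category.id_comp]) ≫ w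
      = prod.lift 0 (𝟙 X) := by
    apply Limits.prod.hom_ext
    · rw [Category.assoc, hwfst, ← Category.assoc, pullback.lift_fst, Category.assoc, he1f]
    · rw [Category.assoc, hwsnd, pullback.lift_snd, prod.lift_snd]
  obtain ⟨t, ht⟩ := StronglyUnital.jse (C := C) X X w hwmono (𝟙 _) _ _
    (by rw [huw, Category.comp_id]) (by rw [hvw, Category.comp_id])
  -- the cooperator
  refine ⟨t ≫ pullback.fst r₂ (prod.lift 0 (𝟙 X)) ≫ r₁ ≫ prod.snd, ?_, ?_⟩
  · have hu : prod.lift (𝟙 X) 0 ≫ t = pullback.lift κ 0 (by rw [hκ2, zero_comp]) := by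
      rw [← cancel_mono w, Category.assoc, ht, Category.comp_id, huw]
    rw [← Category.assoc, hu, ← Category.assoc, pullback.lift_fst, hκ1s]
  · have hv : prod.lift 0 (𝟙 X) ≫ t = pullback.lift (prod.lift 0 (𝟙 X) ≫ e) (𝟙 X)
        (by rw [Category.assoc, he2, Category.comp_id, Category.id_comp]) := by
      rw [← cancel_mono w, Category.assoc, ht, hvw]
      simp only [Category.comp_id]
    rw [← Category.assoc, hv, ← Category.assoc, pullback.lift_fst, Category.assoc, he1s]
    simp

/-- In a strongly unital category in which every morphism with zero kernel is a
monomorphism, an object `X` is abelian (i.e. `1_X` Huq-commutes with itself) iff the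
diagonal `⟨1,1⟩ : X → X × X` is a Bourn-normal monomorphism. -/
theorem stmt16 [HasZeroObject C] [StronglyUnital C]
    (hcond : ∀ {A B : C} (f : A ⟶ B), IsZero (kernel f) → Mono f) (X : C) :
    HuqCommute (𝟙 X) (𝟙 X) ↔ BournNormal (prod.lift (𝟙 X) (𝟙 X)) := by
  have hΔmono : Mono (prod.lift (𝟙 X) (𝟙 X)) :=
    ⟨fun {T} a b h => by simpa using h =≫ prod.fst⟩
  constructor
  · rintro ⟨φ, hφ1, hφ2⟩
    -- the morphism m = ⟨φ, snd⟩ is mono (zero kernel) and split epi, hence iso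
    have hker : IsZero (kernel (prod.lift φ prod.snd)) := by
      rw [IsZero.iff_id_eq_zero]
      have h0 : kernel.ι (prod.lift φ prod.snd) ≫ prod.lift φ prod.snd = 0 :=
        kernel.condition _
      have h1 : kernel.ι (prod.lift φ prod.snd) ≫ φ = 0 := by
        simpa using h0 =≫ prod.fst
      have h2 : kernel.ι (prod.lift φ prod.snd) ≫ prod.snd = 0 := by
        simpa using h0 =≫ prod.snd
      have h3 : kernel.ι (prod.lift φ prod.snd) =
          (kernel.ι (prod.lift φ prod.snd) ≫ prod.fst) ≫ prod.lift (𝟙 X) 0 := by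
        apply Limits.prod.hom_ext <;> simp [h2]
      have h4 : kernel.ι (prod.lift φ prod.snd) ≫ prod.fst = 0 := by
        calc kernel.ι (prod.lift φ prod.snd) ≫ prod.fst
            = ((kernel.ι (prod.lift φ prod.snd) ≫ prod.fst) ≫ prod.lift (𝟙 X) 0) ≫ φ := by
              rw [Category.assoc, hφ1, Category.comp_id]
          _ = kernel.ι (prod.lift φ prod.snd) ≫ φ := by rw [← h3]
          _ = 0 := h1
      have h5 : kernel.ι (prod.lift φ prod.snd) = 0 := by
        apply Limits.prod.hom_ext <;> simp [h4, h2]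
      exact (IsZero.iff_id_eq_zero _).1
        (aux_isZero_of_mono_eq_zero (kernel.ι (prod.lift φ prod.snd)) h5)
    have hmono : Mono (prod.lift φ prod.snd) := hcond _ hker
    have hueq : prod.lift (𝟙 X) (0 : X ⟶ X) ≫ prod.lift φ prod.snd = prod.lift (𝟙 X) 0 := by
      apply Limits.prod.hom_ext <;> simp [hφ1]
    have hveq : prod.lift (0 : X ⟶ X) (𝟙 X) ≫ prod.lift φ prod.snd = prod.lift (𝟙 X) (𝟙 X) := by
      apply Limits.prod.hom_ext <;> simp [hφ2]
    obtain ⟨t, ht⟩ := StronglyUnital.jse' (C := C) X (prod.lift φ prod.snd) hmono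
      (𝟙 _) (prod.lift (𝟙 X) 0) (prod.lift 0 (𝟙 X))
      (by rw [hueq, Category.comp_id]) (by rw [hveq, Category.comp_id])
    have hmt : prod.lift φ prod.snd ≫ t = 𝟙 (X ⨯ X) := by
      rw [← cancel_mono (prod.lift φ prod.snd), Category.assoc, ht,
        Category.comp_id, Category.id_comp]
    have hu : prod.lift (𝟙 X) (0 : X ⟶ X) ≫ t = prod.lift (𝟙 X) 0 := by
      calc prod.lift (𝟙 X) (0 : X ⟶ X) ≫ t
          = (prod.lift (𝟙 X) 0 ≫ prod.lift φ prod.snd) ≫ t := by rw [hueq]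
        _ = prod.lift (𝟙 X) 0 ≫ (prod.lift φ prod.snd ≫ t) := by rw [Category.assoc]
        _ = prod.lift (𝟙 X) 0 := by rw [hmt, Category.comp_id]
    have hv : prod.lift (𝟙 X) (𝟙 X) ≫ t = prod.lift 0 (𝟙 X) := by
      calc prod.lift (𝟙 X) (𝟙 X) ≫ t
          = (prod.lift 0 (𝟙 X) ≫ prod.lift φ prod.snd) ≫ t := by rw [hveq]
        _ = prod.lift 0 (𝟙 X) ≫ (prod.lift φ prod.snd ≫ t) := by rw [Category.assoc]
        _ = prod.lift 0 (𝟙 X) := by rw [hmt, Category.comp_id]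
    have htsnd : t ≫ prod.snd = prod.snd := by
      have h := ht =≫ prod.snd
      simpa using h
    have hδΔ : prod.lift (𝟙 X) (𝟙 X) ≫ t ≫ prod.fst = 0 := by
      rw [← Category.assoc, hv]; simp
    have hlift0 : ∀ {T : C} (gs : T ⟶ X), prod.lift (0 : T ⟶ X) gs ≫ φ = gs := by
      intro T gs
      have h : prod.lift (0 : T ⟶ X) gs = gs ≫ prod.lift 0 (𝟙 X) := by
        apply Limits.prod.hom_ext <;> simp
      rw [h, Category.assoc, hφ2, Category.comp_id]
    -- cancellation: anything killed by δ = t ≫ fst factors through the diagonal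
    have hcanc : ∀ {T : C} (g : T ⟶ X ⨯ X), g ≫ (t ≫ prod.fst) = 0 →
        g = (g ≫ prod.snd) ≫ prod.lift (𝟙 X) (𝟙 X) := by
      intro T g hg
      have hgt : g ≫ t = prod.lift 0 (g ≫ prod.snd) := by
        apply Limits.prod.hom_ext
        · rw [Category.assoc]; simpa using hg
        · rw [Category.assoc, htsnd]; simp
      calc g = (g ≫ t) ≫ prod.lift φ prod.snd := by
              rw [Category.assoc, ht, Category.comp_id]
        _ = prod.lift 0 (g ≫ prod.snd) ≫ prod.lift φ prod.snd := by rw [hgt]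
        _ = (g ≫ prod.snd) ≫ prod.lift (𝟙 X) (𝟙 X) := by
              apply Limits.prod.hom_ext <;> simp [hlift0]
    -- R = kernel pair of δ = t ≫ prod.fst
    have hδcond : pullback.fst (t ≫ prod.fst) (t ≫ prod.fst) ≫ (t ≫ prod.fst)
        = pullback.snd (t ≫ prod.fst) (t ≫ prod.fst) ≫ (t ≫ prod.fst) := pullback.condition
    have hRmono : Mono (prod.lift (pullback.fst (t ≫ prod.fst) (t ≫ prod.fst))
        (pullback.snd (t ≫ prod.fst) (t ≫ prod.fst))) :=
      ⟨fun {T} a b h => pullback.hom_ext (by simpa using h =≫ prod.fst)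
        (by simpa using h =≫ prod.snd)⟩
    have hκw : prod.lift (𝟙 X) (𝟙 X) ≫ (t ≫ prod.fst) = 0 ≫ (t ≫ prod.fst) := by
      rw [hδΔ, zero_comp]
    refine ⟨hΔmono, pullback (t ≫ prod.fst) (t ≫ prod.fst), pullback.fst _ _, pullback.snd _ _,
      ⟨hRmono, ⟨pullback.lift (𝟙 _) (𝟙 _) rfl, by simp, by simp⟩,
        ⟨pullback.lift (pullback.snd _ _) (pullback.fst _ _) pullback.condition.symm,
          by simp, by simp⟩, ?_⟩,
      pullback.lift (prod.lift (𝟙 X) (𝟙 X)) 0 hκw, ?_⟩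
    · -- transitivity
      have houter : pullback.fst (pullback.snd (t ≫ prod.fst) (t ≫ prod.fst))
            (pullback.fst (t ≫ prod.fst) (t ≫ prod.fst))
            ≫ pullback.snd (t ≫ prod.fst) (t ≫ prod.fst)
          = pullback.snd (pullback.snd (t ≫ prod.fst) (t ≫ prod.fst))
            (pullback.fst (t ≫ prod.fst) (t ≫ prod.fst))
            ≫ pullback.fst (t ≫ prod.fst) (t ≫ prod.fst) := pullback.condition
      have hc : (pullback.fst (pullback.snd (t ≫ prod.fst) (t ≫ prod.fst))
            (pullback.fst (t ≫ prod.fst) (t ≫ prod.fst))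
            ≫ pullback.fst (t ≫ prod.fst) (t ≫ prod.fst)) ≫ (t ≫ prod.fst)
          = (pullback.snd (pullback.snd (t ≫ prod.fst) (t ≫ prod.fst))
            (pullback.fst (t ≫ prod.fst) (t ≫ prod.fst))
            ≫ pullback.snd (t ≫ prod.fst) (t ≫ prod.fst)) ≫ (t ≫ prod.fst) := by
        rw [Category.assoc, hδcond, ← Category.assoc, houter, Category.assoc, hδcond,
          ← Category.assoc]
      exact ⟨pullback.lift _ _ hc, by simp, by simp⟩
    · -- the pullback square exhibiting the diagonal as the zero class
      have hcomm : pullback.lift (prod.lift (𝟙 X) (𝟙 X)) 0 hκw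
            ≫ prod.lift (pullback.fst (t ≫ prod.fst) (t ≫ prod.fst))
              (pullback.snd (t ≫ prod.fst) (t ≫ prod.fst))
          = prod.lift (𝟙 X) (𝟙 X) ≫ prod.lift (𝟙 (X ⨯ X)) 0 := by
        apply Limits.prod.hom_ext <;> simp
      refine IsPullback.of_isLimit (PullbackCone.IsLimit.mk hcomm
        (fun s => s.snd ≫ prod.snd)
        (fun s => ?_) (fun s => ?_) (fun s m hm1 hm2 => ?_))
      · have h1 : s.fst ≫ pullback.fst (t ≫ prod.fst) (t ≫ prod.fst) = s.snd := by
          simpa using s.condition =≫ prod.fst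
        have h2 : s.fst ≫ pullback.snd (t ≫ prod.fst) (t ≫ prod.fst) = 0 := by
          simpa using s.condition =≫ prod.snd
        have h3 : s.snd ≫ (t ≫ prod.fst) = 0 := by
          rw [← h1, Category.assoc, hδcond, ← Category.assoc, h2, zero_comp]
        have h4 : s.snd = (s.snd ≫ prod.snd) ≫ prod.lift (𝟙 X) (𝟙 X) := hcanc _ h3
        rw [← cancel_mono (prod.lift (pullback.fst (t ≫ prod.fst) (t ≫ prod.fst))
          (pullback.snd (t ≫ prod.fst) (t ≫ prod.fst)))]
        apply Limits.prod.hom_ext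
        · simp only [Category.assoc, prod.lift_fst, pullback.lift_fst]
          rw [← Category.assoc, ← h4, h1]
        · simp [h2]
      · have h1 : s.fst ≫ pullback.fst (t ≫ prod.fst) (t ≫ prod.fst) = s.snd := by
          simpa using s.condition =≫ prod.fst
        have h2 : s.fst ≫ pullback.snd (t ≫ prod.fst) (t ≫ prod.fst) = 0 := by
          simpa using s.condition =≫ prod.snd
        have h3 : s.snd ≫ (t ≫ prod.fst) = 0 := by
          rw [← h1, Category.assoc, hδcond, ← Category.assoc, h2, zero_comp]
        exact (hcanc _ h3).symm
      · simpa using hm2 =≫ prod.snd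
  · rintro ⟨-, R, r₁, r₂, hrel, κ, hpb⟩
    obtain ⟨e, he1, he2⟩ := hrel.refl
    have hκ1 : κ ≫ r₁ = prod.lift (𝟙 X) (𝟙 X) := by simpa using hpb.w =≫ prod.fst
    have hκ2 : κ ≫ r₂ = 0 := by simpa using hpb.w =≫ prod.snd
    exact backward_aux hcond r₁ r₂ κ e hrel.mono he1 he2 hκ1 hκ2 hpb
end
end
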